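/- Let e : (0,∞) → ℝ be twice continuously differentiable with e''(v) > 0 for all v > 0. Then the total energy E(ρ, m, S, T) = ρ·e(1/ρ) + (|m|² + |S|² + T²)/(2ρ), defined for ρ > 0, m ∈ ℝ^d, S ∈ ℝ^N, T ∈ ℝ, is a strictly convex function of the conserved variables (ρ, m, S, T), i.e., its Hessian is positive definite at every point of the domain. -/

import Mathlib

open scoped BigOperators

set_option maxHeartbeats 1000000
open scoped RealInnerProductSpace


variable {d N : ℕ}

abbrev PP (d N : ℕ) := ℝ × EuclideanSpace ℝ (Fin d) × EuclideanSpace ℝ (Fin N) × ℝ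

lemma e_deriv_aux {e : ℝ → ℝ} (he : ContDiffOn ℝ 2 e (Set.Ioi 0)) {u : ℝ} (hu : 0 < u) :
    HasDerivAt e (deriv e u) u := by
  have h := he.contDiffAt (isOpen_Ioi.mem_nhds hu)
  exact (h.differentiableAt (by norm_num)).hasDerivAt

lemma e1_deriv_aux {e : ℝ → ℝ} (he : ContDiffOn ℝ 2 e (Set.Ioi 0)) {u : ℝ} (hu : 0 < u) :
    HasDerivAt (deriv e) (deriv (deriv e) u) u := by
  have h1 : ContDiffOn ℝ 1 (deriv e) (Set.Ioi 0) :=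
    he.deriv_of_isOpen isOpen_Ioi (by norm_num)
  have h := h1.contDiffAt (isOpen_Ioi.mem_nhds hu)
  exact (h.differentiableAt (by norm_num)).hasDerivAt

lemma fderiv_eval {e : ℝ → ℝ} (he : ContDiffOn ℝ 2 e (Set.Ioi 0))
    (v y : PP d N) (hy : 0 < y.1) :
    fderiv ℝ (fun z : PP d N => z.1 * e (1 / z.1) +
        (‖z.2.1‖ ^ 2 + ‖z.2.2.1‖ ^ 2 + z.2.2.2 ^ 2) / (2 * z.1)) y v
      = (e (1/y.1) - deriv e (1/y.1) / y.1) * v.1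
        + (⟪y.2.1, v.2.1⟫ + ⟪y.2.2.1, v.2.2.1⟫ + y.2.2.2 * v.2.2.2) / y.1
        - (‖y.2.1‖^2 + ‖y.2.2.1‖^2 + y.2.2.2^2) * v.1 / (2*y.1^2) := by
  have hne : y.1 ≠ 0 := ne_of_gt hy
  have h1 : HasFDerivAt (fun z : PP d N => z.1)
      (ContinuousLinearMap.fst ℝ ℝ _) y := hasFDerivAt_fst
  have hinv : HasFDerivAt (fun z : PP d N => 1 / z.1)
      ((-(y.1^2)⁻¹) • ContinuousLinearMap.fst ℝ ℝ _) y := by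
    simp only [one_div]
    exact (hasDerivAt_inv hne).comp_hasFDerivAt y h1
  have hu : (0:ℝ) < 1 / y.1 := by positivity
  have hcomp : HasFDerivAt (fun z : PP d N => e (1 / z.1))
      (deriv e (1/y.1) • ((-(y.1^2)⁻¹) • ContinuousLinearMap.fst ℝ ℝ _)) y :=
    (e_deriv_aux he hu).comp_hasFDerivAt y hinv
  have hmul := h1.mul hcomp
  have hsnd : HasFDerivAt (fun z : PP d N => z.2) (ContinuousLinearMap.snd ℝ ℝ _) y :=
    hasFDerivAt_snd
  have hm := hsnd.fst
  have hS := hsnd.snd.fst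
  have hT := hsnd.snd.snd
  have hQm := hm.inner ℝ hm
  have hQS := hS.inner ℝ hS
  have hQT := hT.mul hT
  have hQ := (hQm.add hQS).add hQT
  have hden : HasFDerivAt (fun z : PP d N => 2 * z.1)
      ((2:ℝ) • ContinuousLinearMap.fst ℝ ℝ _) y := by
    simpa using h1.const_mul (2:ℝ)
  have h2ne : (2:ℝ) * y.1 ≠ 0 := by positivity
  have hinv2 : HasFDerivAt (fun z : PP d N => ((2:ℝ) * z.1)⁻¹)
      ((-(((2:ℝ)*y.1)^2)⁻¹) • ((2:ℝ) • ContinuousLinearMap.fst ℝ ℝ _)) y :=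
    (hasDerivAt_inv h2ne).comp_hasFDerivAt y hden
  have hdiv := hQ.mul hinv2
  have htot := hmul.add hdiv
  have heq : (fun z : PP d N => z.1 * e (1 / z.1) +
        (‖z.2.1‖ ^ 2 + ‖z.2.2.1‖ ^ 2 + z.2.2.2 ^ 2) / (2 * z.1))
      = (fun z : PP d N => z.1 * e (1 / z.1) +
        (⟪z.2.1, z.2.1⟫ + ⟪z.2.2.1, z.2.2.1⟫ + z.2.2.2 * z.2.2.2) * (2 * z.1)⁻¹) := by
    funext z
    rw [← real_inner_self_eq_norm_sq, ← real_inner_self_eq_norm_sq, sq,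
      div_eq_mul_inv (⟪z.2.1, z.2.1⟫ + ⟪z.2.2.1, z.2.2.1⟫ + z.2.2.2 * z.2.2.2) (2 * z.1)]
  rw [heq, (show HasFDerivAt (fun z : PP d N => z.1 * e (1 / z.1) +
        (⟪z.2.1, z.2.1⟫ + ⟪z.2.2.1, z.2.2.1⟫ + z.2.2.2 * z.2.2.2) * (2 * z.1)⁻¹) _ y from htot).fderiv]
  simp only [ContinuousLinearMap.add_apply, ContinuousLinearMap.smul_apply,
    ContinuousLinearMap.comp_apply, ContinuousLinearMap.prod_apply,
    ContinuousLinearMap.coe_fst', ContinuousLinearMap.coe_snd',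
    fderivInnerCLM_apply, smul_eq_mul, real_inner_self_eq_norm_sq, Pi.add_apply, Pi.mul_apply, Pi.pow_apply]
  rw [real_inner_comm v.2.1 y.2.1, real_inner_comm v.2.2.1 y.2.2.1]
  field_simp
  ring

lemma fderiv2_eval {e : ℝ → ℝ} (he : ContDiffOn ℝ 2 e (Set.Ioi 0))
    (v x : PP d N) (hx : 0 < x.1) :
    fderiv ℝ (fun y : PP d N =>
        (e (y.1⁻¹) - deriv e (y.1⁻¹) * y.1⁻¹) * v.1
        + (⟪y.2.1, v.2.1⟫ + ⟪y.2.2.1, v.2.2.1⟫ + y.2.2.2 * v.2.2.2) * y.1⁻¹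
        - (⟪y.2.1, y.2.1⟫ + ⟪y.2.2.1, y.2.2.1⟫ + y.2.2.2 * y.2.2.2) * v.1 * ((2:ℝ) * (y.1*y.1))⁻¹) x v
      = deriv (deriv e) x.1⁻¹ * v.1^2 / x.1^3
        + (‖v.2.1‖^2 + ‖v.2.2.1‖^2 + v.2.2.2^2) / x.1
        - 2 * v.1 * (⟪x.2.1, v.2.1⟫ + ⟪x.2.2.1, v.2.2.1⟫ + x.2.2.2 * v.2.2.2) / x.1^2
        + v.1^2 * (‖x.2.1‖^2 + ‖x.2.2.1‖^2 + x.2.2.2^2) / x.1^3 := by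
  have hne : x.1 ≠ 0 := ne_of_gt hx
  have huinv : (0:ℝ) < x.1⁻¹ := by positivity
  have h1 : HasFDerivAt (fun z : PP d N => z.1)
      (ContinuousLinearMap.fst ℝ ℝ _) x := hasFDerivAt_fst
  have hInv : HasFDerivAt (fun z : PP d N => z.1⁻¹)
      ((-(x.1^2)⁻¹) • ContinuousLinearMap.fst ℝ ℝ _) x :=
    (hasDerivAt_inv hne).comp_hasFDerivAt x h1
  have hE : HasFDerivAt (fun z : PP d N => e (z.1⁻¹))
      (deriv e x.1⁻¹ • ((-(x.1^2)⁻¹) • ContinuousLinearMap.fst ℝ ℝ _)) x :=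
    (e_deriv_aux he huinv).comp_hasFDerivAt x hInv
  have hE1 : HasFDerivAt (fun z : PP d N => deriv e (z.1⁻¹))
      (deriv (deriv e) x.1⁻¹ • ((-(x.1^2)⁻¹) • ContinuousLinearMap.fst ℝ ℝ _)) x :=
    by have := (e1_deriv_aux he huinv).comp_hasFDerivAt x hInv; exact this
  have hA := ((hE.sub (hE1.mul hInv)).mul_const v.1)
  have hsnd : HasFDerivAt (fun z : PP d N => z.2) (ContinuousLinearMap.snd ℝ ℝ _) x :=
    hasFDerivAt_snd
  have hm := hsnd.fst
  have hS := hsnd.snd.fst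
  have hT := hsnd.snd.snd
  have hBm := hm.inner ℝ (hasFDerivAt_const v.2.1 x)
  have hBS := hS.inner ℝ (hasFDerivAt_const v.2.2.1 x)
  have hBT := hT.mul_const v.2.2.2
  have hB := ((hBm.add hBS).add hBT).mul hInv
  have hQ := ((hm.inner ℝ hm).add (hS.inner ℝ hS)).add (hT.mul hT)
  have hsq : HasFDerivAt (fun z : PP d N => (2:ℝ) * (z.1*z.1)) _ x := (h1.mul h1).const_mul (2:ℝ)
  have h2ne : (2:ℝ) * (x.1*x.1) ≠ 0 := by positivity
  have hinvsq : HasFDerivAt (fun z : PP d N => ((2:ℝ) * (z.1*z.1))⁻¹) _ x :=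
    (hasDerivAt_inv h2ne).comp_hasFDerivAt x hsq
  have hC := (hQ.mul_const v.1).mul hinvsq
  have htot := (hA.add hB).sub hC
  rw [(show HasFDerivAt (fun y : PP d N =>
        (e (y.1⁻¹) - deriv e (y.1⁻¹) * y.1⁻¹) * v.1
        + (⟪y.2.1, v.2.1⟫ + ⟪y.2.2.1, v.2.2.1⟫ + y.2.2.2 * v.2.2.2) * y.1⁻¹
        - (⟪y.2.1, y.2.1⟫ + ⟪y.2.2.1, y.2.2.1⟫ + y.2.2.2 * y.2.2.2) * v.1 * ((2:ℝ) * (y.1*y.1))⁻¹) _ x from htot).fderiv]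
  simp only [ContinuousLinearMap.add_apply, ContinuousLinearMap.sub_apply,
    ContinuousLinearMap.smul_apply, ContinuousLinearMap.comp_apply,
    ContinuousLinearMap.prod_apply, ContinuousLinearMap.coe_fst', ContinuousLinearMap.coe_snd',
    fderivInnerCLM_apply, smul_eq_mul, real_inner_self_eq_norm_sq,
    ContinuousLinearMap.zero_apply, inner_zero_right, zero_add, add_zero, mul_zero, zero_mul,
    Pi.add_apply, Pi.mul_apply, Pi.pow_apply]
  rw [real_inner_comm v.2.1 x.2.1, real_inner_comm v.2.2.1 x.2.2.1,
    ← real_inner_self_eq_norm_sq v.2.1, ← real_inner_self_eq_norm_sq v.2.2.1,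
    ← real_inner_self_eq_norm_sq x.2.1, ← real_inner_self_eq_norm_sq x.2.2.1]
  field_simp
  ring

lemma expand_sq {n : ℕ} (a b : EuclideanSpace ℝ (Fin n)) (s t : ℝ) :
    ‖s • a - t • b‖^2 = s^2*‖a‖^2 - 2*(s*t)*⟪a, b⟫ + t^2*‖b‖^2 := by
  rw [norm_sub_sq_real, norm_smul, norm_smul, real_inner_smul_left, real_inner_smul_right]
  simp only [mul_pow, sq_abs, Real.norm_eq_abs]
  ring

/-- The total energy `E(ρ,m,S,T) = ρ e(1/ρ) + (|m|² + |S|² + T²)/(2ρ)` is strictly convex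
in the conserved variables: its Hessian quadratic form is positive definite at every point
of the domain `{ρ > 0} × ℝ^d × ℝ^N × ℝ`. -/
theorem total_energy_strictly_convex (d N : ℕ) (e : ℝ → ℝ)
    (he : ContDiffOn ℝ 2 e (Set.Ioi 0)) (he'' : ∀ v > (0:ℝ), 0 < deriv (deriv e) v) :
    ∀ x : ℝ × EuclideanSpace ℝ (Fin d) × EuclideanSpace ℝ (Fin N) × ℝ, 0 < x.1 →
      ∀ v : ℝ × EuclideanSpace ℝ (Fin d) × EuclideanSpace ℝ (Fin N) × ℝ, v ≠ 0 →
        0 < fderiv ℝ (fun y : ℝ × EuclideanSpace ℝ (Fin d) × EuclideanSpace ℝ (Fin N) × ℝ =>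
              fderiv ℝ (fun z : ℝ × EuclideanSpace ℝ (Fin d) × EuclideanSpace ℝ (Fin N) × ℝ =>
                  z.1 * e (1 / z.1) +
                    (‖z.2.1‖ ^ 2 + ‖z.2.2.1‖ ^ 2 + z.2.2.2 ^ 2) / (2 * z.1)) y v) x v := by
  intro x hx v hv
  have hne : x.1 ≠ 0 := ne_of_gt hx
  have hopen : IsOpen {y : PP d N | 0 < y.1} := isOpen_lt continuous_const continuous_fst
  have hev : (fun y : PP d N => fderiv ℝ (fun z : PP d N =>
        z.1 * e (1 / z.1) + (‖z.2.1‖ ^ 2 + ‖z.2.2.1‖ ^ 2 + z.2.2.2 ^ 2) / (2 * z.1)) y v)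
      =ᶠ[nhds x] (fun y : PP d N =>
        (e (y.1⁻¹) - deriv e (y.1⁻¹) * y.1⁻¹) * v.1
        + (⟪y.2.1, v.2.1⟫ + ⟪y.2.2.1, v.2.2.1⟫ + y.2.2.2 * v.2.2.2) * y.1⁻¹
        - (⟪y.2.1, y.2.1⟫ + ⟪y.2.2.1, y.2.2.1⟫ + y.2.2.2 * y.2.2.2) * v.1
            * ((2:ℝ) * (y.1*y.1))⁻¹) := by
    filter_upwards [hopen.mem_nhds hx] with y hy
    rw [fderiv_eval he v y hy]
    have hyne : y.1 ≠ 0 := ne_of_gt hy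
    simp only [one_div, real_inner_self_eq_norm_sq]
    field_simp
  rw [hev.fderiv_eq, fderiv2_eval he v x hx]
  have hK : deriv (deriv e) x.1⁻¹ * v.1^2 / x.1^3
        + (‖v.2.1‖^2 + ‖v.2.2.1‖^2 + v.2.2.2^2) / x.1
        - 2 * v.1 * (⟪x.2.1, v.2.1⟫ + ⟪x.2.2.1, v.2.2.1⟫ + x.2.2.2 * v.2.2.2) / x.1^2
        + v.1^2 * (‖x.2.1‖^2 + ‖x.2.2.1‖^2 + x.2.2.2^2) / x.1^3
      = (deriv (deriv e) x.1⁻¹ * v.1^2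
          + ‖x.1 • v.2.1 - v.1 • x.2.1‖^2 + ‖x.1 • v.2.2.1 - v.1 • x.2.2.1‖^2
          + (x.1 * v.2.2.2 - v.1 * x.2.2.2)^2) / x.1^3 := by
    rw [expand_sq, expand_sq, real_inner_comm v.2.1 x.2.1, real_inner_comm v.2.2.1 x.2.2.1]
    generalize (⟪x.2.1, v.2.1⟫ : ℝ) = A
    generalize (⟪x.2.2.1, v.2.2.1⟫ : ℝ) = B
    field_simp
    ring
  rw [hK]
  have he2 : 0 < deriv (deriv e) x.1⁻¹ := he'' _ (by positivity)
  have t2 : (0:ℝ) ≤ ‖x.1 • v.2.1 - v.1 • x.2.1‖^2 := sq_nonneg _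
  have t3 : (0:ℝ) ≤ ‖x.1 • v.2.2.1 - v.1 • x.2.2.1‖^2 := sq_nonneg _
  have t4 : (0:ℝ) ≤ (x.1 * v.2.2.2 - v.1 * x.2.2.2)^2 := sq_nonneg _
  have hnum : 0 < deriv (deriv e) x.1⁻¹ * v.1^2
      + ‖x.1 • v.2.1 - v.1 • x.2.1‖^2 + ‖x.1 • v.2.2.1 - v.1 • x.2.2.1‖^2
      + (x.1 * v.2.2.2 - v.1 * x.2.2.2)^2 := by
    by_cases h1 : v.1 = 0
    · have hv2 : v.2.1 ≠ 0 ∨ v.2.2.1 ≠ 0 ∨ v.2.2.2 ≠ 0 := by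
        by_contra h
        push_neg at h
        obtain ⟨a, b, c⟩ := h
        exact hv (by simp [Prod.ext_iff, h1, a, b, c])
      simp only [h1, zero_smul, sub_zero, mul_zero, zero_mul, sub_zero]
      rcases hv2 with h2 | h2 | h2
      · have : (0:ℝ) < ‖x.1 • v.2.1‖^2 :=
          pow_pos (norm_pos_iff.mpr (smul_ne_zero hne h2)) 2
        have t3' : (0:ℝ) ≤ ‖x.1 • v.2.2.1‖^2 := sq_nonneg _
        have t4' : (0:ℝ) ≤ (x.1 * v.2.2.2)^2 := sq_nonneg _
        nlinarith [sq_nonneg v.1, he2.le]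
      · have : (0:ℝ) < ‖x.1 • v.2.2.1‖^2 :=
          pow_pos (norm_pos_iff.mpr (smul_ne_zero hne h2)) 2
        have t2' : (0:ℝ) ≤ ‖x.1 • v.2.1‖^2 := sq_nonneg _
        have t4' : (0:ℝ) ≤ (x.1 * v.2.2.2)^2 := sq_nonneg _
        nlinarith [sq_nonneg v.1, he2.le]
      · have : (0:ℝ) < (x.1 * v.2.2.2)^2 :=
          lt_of_le_of_ne (sq_nonneg _) (Ne.symm (pow_ne_zero 2 (mul_ne_zero hne h2)))
        have t2' : (0:ℝ) ≤ ‖x.1 • v.2.1‖^2 := sq_nonneg _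
        have t3' : (0:ℝ) ≤ ‖x.1 • v.2.2.1‖^2 := sq_nonneg _
        nlinarith [sq_nonneg v.1, he2.le]
    · have hsq : 0 < v.1^2 :=
        lt_of_le_of_ne (sq_nonneg _) (Ne.symm (pow_ne_zero 2 h1))
      have : 0 < deriv (deriv e) x.1⁻¹ * v.1^2 := mul_pos he2 hsq
      linarith
  exact div_pos hnum (by positivity)
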